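/- Let θ > 0 be irrational and let C > 1 be an integer. Then there exist a positive integer K and a strictly increasing sequence of natural numbers m₁ < m₂ < ⋯ such that the limit L = lim_{i→∞} |{K C^{m_i} θ} − {K C^{m_i+1} θ}| exists and satisfies either 1/3 ≤ L ≤ 1/2 or 1/2 ≤ L ≤ 2/3. -/

import Mathlib

open Filter

noncomputable def dd (x : ℝ) : ℝ := |x - round x|

lemma dd_nonneg (x : ℝ) : 0 ≤ dd x := abs_nonneg _

lemma dd_le_half (x : ℝ) : dd x ≤ 1 / 2 := abs_sub_round x

lemma dd_le_int (x : ℝ) (n : ℤ) : dd x ≤ |x - n| := by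
  by_cases h : n = round x
  · simp [dd, h]
  · have hne : round x - n ≠ 0 := sub_ne_zero.mpr fun hh => h hh.symm
    have h1 : (1 : ℝ) ≤ |((round x : ℤ) : ℝ) - (n : ℝ)| := by
      have := Int.one_le_abs hne
      have : ((1 : ℤ) : ℝ) ≤ ((|round x - n| : ℤ) : ℝ) := by exact_mod_cast this
      simpa [Int.cast_abs] using this
    have htri : |((round x : ℤ) : ℝ) - (n : ℝ)| ≤ |((round x : ℤ) : ℝ) - x| + |x - n| :=
      abs_sub_le _ _ _
    have h2 : |((round x : ℤ) : ℝ) - x| = dd x := by rw [abs_sub_comm]; rfl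
    have h3 : dd x ≤ 1 / 2 := abs_sub_round x
    unfold dd at *
    linarith
lemma round_eq_of_abs_lt {x : ℝ} {n : ℤ} (h : |x - n| < 1 / 2) : round x = n := by
  by_contra hne
  have hne' : round x - n ≠ 0 := sub_ne_zero.mpr hne
  have h1 : (1 : ℝ) ≤ |((round x : ℤ) : ℝ) - (n : ℝ)| := by
    have := Int.one_le_abs hne'
    have : ((1 : ℤ) : ℝ) ≤ ((|round x - n| : ℤ) : ℝ) := by exact_mod_cast this
    simpa [Int.cast_abs] using this
  have htri : |((round x : ℤ) : ℝ) - (n : ℝ)| ≤ |((round x : ℤ) : ℝ) - x| + |x - n| :=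
    abs_sub_le _ _ _
  have h2 : |((round x : ℤ) : ℝ) - x| = dd x := by rw [abs_sub_comm]; rfl
  have h3 : dd x ≤ |x - n| := dd_le_int x n
  linarith

lemma dd_int_mul (n : ℤ) (x : ℝ) (h : |(n : ℝ)| * dd x < 1 / 2) :
    dd ((n : ℝ) * x) = |(n : ℝ)| * dd x := by
  have key : |(n : ℝ) * x - ((n * round x : ℤ) : ℝ)| = |(n : ℝ)| * dd x := by
    push_cast
    rw [show (n : ℝ) * x - (n : ℝ) * (round x : ℝ) = (n : ℝ) * (x - round x) by ring,
      abs_mul]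
    rfl
  have hr : round ((n : ℝ) * x) = n * round x := round_eq_of_abs_lt (by rw [key]; exact h)
  unfold dd
  rw [hr, key]
  rfl

lemma lemA (x : ℝ) (h1 : dd x < 1 / 3) (h2 : dd (2 * x) < 1 / 3) :
    dd (2 * x) = 2 * dd x := by
  rcases lt_or_ge (dd x) (1 / 4) with h | h
  · have := dd_int_mul 2 x (by
      rw [show |((2 : ℤ) : ℝ)| = 2 by norm_num]
      linarith)
    simpa using this
  · exfalso
    set s : ℤ := round (2 * x) - 2 * round x with hs
    have hval : 2 * x - round (2 * x) = 2 * (x - round x) - (s : ℝ) := by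
      rw [hs]; push_cast; ring
    have habs : dd (2 * x) = |2 * (x - round x) - (s : ℝ)| := by rw [dd, hval]
    have hdx : dd x = |x - round x| := rfl
    have h2e : |2 * (x - round x)| = 2 * dd x := by
      rw [abs_mul, hdx]; norm_num
    rcases eq_or_ne s 0 with h0 | h0
    · rw [h0] at habs
      simp only [Int.cast_zero, sub_zero] at habs
      rw [habs, h2e] at h2
      linarith
    · have hs1 : (1 : ℝ) ≤ |(s : ℝ)| := by
        have := Int.one_le_abs h0
        have : ((1 : ℤ) : ℝ) ≤ ((|s| : ℤ) : ℝ) := by exact_mod_cast this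
        simpa [Int.cast_abs] using this
      have htri : |(s : ℝ)| ≤ |2 * (x - round x) - (s : ℝ)| + |2 * (x - round x)| := by
        have h' : |(s : ℝ)| = |(2 * (x - round x) - (s : ℝ)) - 2 * (x - round x)| := by
          rw [show (2 * (x - round x) - (s : ℝ)) - 2 * (x - round x) = -(s : ℝ) by ring,
            abs_neg]
        rw [h']
        exact abs_sub _ _
      rw [h2e] at htri
      rw [habs] at h2
      linarith

lemma mainFalse (φ : ℝ) (hφ : Irrational φ) (C : ℤ) (hC : 1 < C)
    (H : ∀ K : ℕ, 0 < K → ∀ᶠ m in atTop, dd ((K : ℝ) * (C : ℝ) ^ m * φ) < 1 / 3) :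
    False := by
  set y : ℕ → ℝ := fun m => (C : ℝ) ^ m * φ with hy
  have hCpos : (0 : ℝ) < (C : ℝ) := by exact_mod_cast lt_trans one_pos hC
  have hC1 : (1 : ℝ) < (C : ℝ) := by exact_mod_cast hC
  -- Q j
  have Q : ∀ j : ℕ, ∀ᶠ m in atTop,
      dd ((2 : ℝ) ^ j * y m) = 2 ^ j * dd (y m) ∧ (2 : ℝ) ^ j * dd (y m) < 1 / 3 := by
    intro j
    induction j with
    | zero =>
        filter_upwards [H 1 one_pos] with m hm
        have hm' : dd (y m) < 1 / 3 := by
          rw [hy]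
          simpa using hm
        exact ⟨by simp, by simpa using hm'⟩
    | succ j ih =>
        filter_upwards [ih, H (2 ^ (j + 1)) (by positivity)] with m h1 h2
        have hx : ((2 ^ (j + 1) : ℕ) : ℝ) * (C : ℝ) ^ m * φ = 2 * ((2 : ℝ) ^ j * y m) := by
          rw [hy]; push_cast; ring
        rw [hx] at h2
        have hdd1 : dd ((2 : ℝ) ^ j * y m) < 1 / 3 := by rw [h1.1]; exact h1.2
        have hA := lemA ((2 : ℝ) ^ j * y m) hdd1 h2
        have heq : (2 : ℝ) ^ (j + 1) * y m = 2 * ((2 : ℝ) ^ j * y m) := by ring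
        constructor
        · rw [heq, hA, h1.1]; ring
        · rw [hA, h1.1] at h2
          have hrw : (2 : ℝ) ^ (j + 1) * dd (y m) = 2 * (2 ^ j * dd (y m)) := by ring
          rw [hrw]
          exact h2
  -- small eventually
  obtain ⟨j, hj⟩ := pow_unbounded_of_one_lt (C : ℝ) (one_lt_two)
  have hsmall : ∀ᶠ m in atTop, dd (y m) < 1 / (2 * (C : ℝ)) := by
    filter_upwards [Q j] with m hm
    have h2j : (0 : ℝ) < 2 ^ j := by positivity
    have : dd (y m) < 1 / 3 / 2 ^ j := by
      rw [lt_div_iff₀ h2j]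
      calc dd (y m) * 2 ^ j = 2 ^ j * dd (y m) := by ring
        _ < 1 / 3 := hm.2
    have hlt : 1 / 3 / (2 : ℝ) ^ j < 1 / (2 * (C : ℝ)) := by
      rw [div_lt_div_iff₀ (by positivity) (by positivity)]
      nlinarith [hj, hCpos]
    linarith
  obtain ⟨M, hM⟩ := hsmall.exists_forall_of_atTop
  -- positivity of dd (y M)
  have hyM : Irrational (y M) := by
    have : y M = ((C ^ M : ℤ) : ℝ) * φ := by rw [hy]; push_cast; ring
    rw [this]
    exact hφ.intCast_mul (pow_ne_zero _ (by omega))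
  have hd0 : 0 < dd (y M) := by
    rcases lt_or_eq_of_le (dd_nonneg (y M)) with h | h
    · exact h
    · exfalso
      have : y M = (round (y M) : ℝ) := by
        have := abs_eq_zero.mp h.symm
        linarith [this]
      exact hyM.ne_int (round (y M)) this
  -- growth
  have grow : ∀ t : ℕ, dd (y (M + t)) = (C : ℝ) ^ t * dd (y M) := by
    intro t
    induction t with
    | zero => simp
    | succ t ih =>
        have hstep : y (M + t + 1) = (C : ℝ) * y (M + t) := by
          rw [hy]; simp [pow_succ]; ring
        have hlt : |(C : ℝ)| * dd (y (M + t)) < 1 / 2 := by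
          rw [abs_of_pos hCpos]
          have := hM (M + t) (by omega)
          calc (C : ℝ) * dd (y (M + t)) < (C : ℝ) * (1 / (2 * (C : ℝ))) := by
                exact mul_lt_mul_of_pos_left this hCpos
            _ = 1 / 2 := by field_simp
        have := dd_int_mul C (y (M + t)) hlt
        rw [show M + (t + 1) = M + t + 1 by ring, hstep, this, abs_of_pos hCpos, ih]
        ring
  obtain ⟨t, ht⟩ := pow_unbounded_of_one_lt ((1 / (2 * (C : ℝ))) / dd (y M)) hC1
  have h1 : dd (y (M + t)) < 1 / (2 * (C : ℝ)) := hM (M + t) (by omega)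
  rw [grow t] at h1
  have : 1 / (2 * (C : ℝ)) < (C : ℝ) ^ t * dd (y M) := by
    rw [div_lt_iff₀ hd0] at ht
    linarith
  linarith

lemma bridge (a b : ℝ) (h : (1 : ℝ) / 3 ≤ dd (b - a)) :
    1 / 3 ≤ |Int.fract a - Int.fract b| ∧ |Int.fract a - Int.fract b| ≤ 2 / 3 := by
  have h' : ∀ n : ℤ, 1 / 3 ≤ |b - a - n| := fun n => le_trans h (dd_le_int _ n)
  set u := Int.fract a - Int.fract b with hu
  have hku : b - a - ((⌊b⌋ - ⌊a⌋ : ℤ) : ℝ) = -u := by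
    rw [hu]; unfold Int.fract; push_cast; ring
  have h1 : 1 / 3 ≤ |u| := by
    have := h' (⌊b⌋ - ⌊a⌋)
    rwa [hku, abs_neg] at this
  have ha0 := Int.fract_nonneg a
  have ha1 := Int.fract_lt_one a
  have hb0 := Int.fract_nonneg b
  have hb1 := Int.fract_lt_one b
  have hub : u < 1 := by rw [hu]; linarith
  have hlb : -1 < u := by rw [hu]; linarith
  refine ⟨h1, ?_⟩
  rcases le_or_gt 0 u with hpos | hneg
  · have := h' (⌊b⌋ - ⌊a⌋ - 1)
    have heq : b - a - ((⌊b⌋ - ⌊a⌋ - 1 : ℤ) : ℝ) = 1 - u := by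
      push_cast
      rw [show b - a - ((⌊b⌋ : ℝ) - (⌊a⌋ : ℝ) - 1) = (b - a - ((⌊b⌋ : ℝ) - (⌊a⌋ : ℝ))) + 1 by
        ring]
      push_cast at hku
      linarith [hku]
    rw [heq, abs_of_nonneg (by linarith : (0:ℝ) ≤ 1 - u)] at this
    rw [abs_of_nonneg hpos]
    linarith
  · have := h' (⌊b⌋ - ⌊a⌋ + 1)
    have heq : b - a - ((⌊b⌋ - ⌊a⌋ + 1 : ℤ) : ℝ) = -u - 1 := by
      push_cast
      push_cast at hku
      linarith [hku]
    rw [heq, abs_of_nonpos (by linarith : -u - 1 ≤ 0)] at this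
    rw [abs_of_neg hneg]
    linarith

/-- If `θ > 0` is irrational and `C > 1` is an integer, then there exist
`K > 0` and a strictly increasing sequence `m₁ < m₂ < ⋯` of naturals such that
`L = lim_i |{K C^(m_i) θ} - {K C^(m_i + 1) θ}|` exists and satisfies
either `1/3 ≤ L ≤ 1/2` or `1/2 ≤ L ≤ 2/3`. -/
theorem stmt4 (θ : ℝ) (hθpos : 0 < θ) (hθ : Irrational θ) (C : ℤ) (hC : 1 < C) :
    ∃ K : ℕ, 0 < K ∧ ∃ m : ℕ → ℕ, StrictMono m ∧ ∃ L : ℝ,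
      Tendsto (fun i =>
          |Int.fract ((K : ℝ) * (C : ℝ) ^ (m i) * θ) -
            Int.fract ((K : ℝ) * (C : ℝ) ^ (m i + 1) * θ)|) atTop (nhds L) ∧
      ((1 / 3 ≤ L ∧ L ≤ 1 / 2) ∨ (1 / 2 ≤ L ∧ L ≤ 2 / 3)) := by
  set φ : ℝ := ((C : ℝ) - 1) * θ with hφdef
  have hφ : Irrational φ := by
    have h1 : Irrational (((C - 1 : ℤ) : ℝ) * θ) := hθ.intCast_mul (by omega)
    have : ((C - 1 : ℤ) : ℝ) = (C : ℝ) - 1 := by push_cast; ring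
    rwa [this] at h1
  have key : ∃ K : ℕ, 0 < K ∧
      {m : ℕ | 1 / 3 ≤ dd ((K : ℝ) * (C : ℝ) ^ m * φ)}.Infinite := by
    by_contra hcon
    push_neg at hcon
    apply mainFalse φ hφ C hC
    intro K hK
    have hfin : {m : ℕ | 1 / 3 ≤ dd ((K : ℝ) * (C : ℝ) ^ m * φ)}.Finite :=
      hcon K hK
    have := Set.Finite.eventually_cofinite_notMem hfin
    rw [Nat.cofinite_eq_atTop] at this
    filter_upwards [this] with m hm
    simpa using not_le.mp hm
  obtain ⟨K, hK, hinf⟩ := key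
  set p : ℕ → Prop := fun m => 1 / 3 ≤ dd ((K : ℝ) * (C : ℝ) ^ m * φ) with hp
  have hinf' : (setOf p).Infinite := hinf
  set n : ℕ → ℕ := Nat.nth p with hn
  have hmono : StrictMono n := Nat.nth_strictMono hinf'
  set g : ℕ → ℝ := fun i =>
    |Int.fract ((K : ℝ) * (C : ℝ) ^ (n i) * θ) -
      Int.fract ((K : ℝ) * (C : ℝ) ^ (n i + 1) * θ)| with hg
  have hgmem : ∀ i, g i ∈ Set.Icc (1 / 3 : ℝ) (2 / 3) := by
    intro i
    have hpi : p (n i) := Nat.nth_mem_of_infinite hinf' i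
    rw [hp] at hpi
    have hdiff : (K : ℝ) * (C : ℝ) ^ (n i + 1) * θ - (K : ℝ) * (C : ℝ) ^ (n i) * θ =
        (K : ℝ) * (C : ℝ) ^ (n i) * φ := by
      rw [hφdef, pow_succ]; ring
    have hb := bridge ((K : ℝ) * (C : ℝ) ^ (n i) * θ) ((K : ℝ) * (C : ℝ) ^ (n i + 1) * θ)
      (by rw [hdiff]; exact hpi)
    exact ⟨hb.1, hb.2⟩
  obtain ⟨L, hL, ψ, hψ, htend⟩ := isCompact_Icc.tendsto_subseq hgmem
  refine ⟨K, hK, n ∘ ψ, hmono.comp hψ, L, htend, ?_⟩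
  rcases le_total L (1 / 2) with h | h
  · exact Or.inl ⟨hL.1, h⟩
  · exact Or.inr ⟨h, hL.2⟩
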